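/- Let V be an eiconal algebra satisfying trace L_x = 0 for all x, let c be a nonzero idempotent, and set m = dim V_{−1}(c) − 1. Then dim V_{1/2}(c) = 2m and dim V = 3m + 2. -/

import Mathlib

open RealInnerProductSpace

/-- In a trace-free (harmonic) eiconal algebra, with
`m = dim V_{−1}(c) − 1`, one has `dim V_{1/2}(c) = 2m` and `dim V = 3m + 2`. -/
theorem stmt_16 {V : Type*} [NormedAddCommGroup V] [InnerProductSpace ℝ V]
    [FiniteDimensional ℝ V]
    (mul : V →ₗ[ℝ] V →ₗ[ℝ] V)
    (hcomm : ∀ x y, mul x y = mul y x)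
    (hassoc : ∀ x y z, ⟪mul x y, z⟫ = ⟪x, mul y z⟫)
    (heic : ∀ x, mul x (mul x x) = ⟪x, x⟫ • x)
    (htr : ∀ x : V, LinearMap.trace ℝ V (mul x) = 0)
    (c : V) (hc : mul c c = c) (hc0 : c ≠ 0)
    (m : ℕ)
    (hm : m = Module.finrank ℝ (Module.End.eigenspace (mul c) (-1)) - 1) :
    Module.finrank ℝ (Module.End.eigenspace (mul c) (1 / 2 : ℝ)) = 2 * m ∧
      Module.finrank ℝ V = 3 * m + 2 := by
  classical
  set L : V →ₗ[ℝ] V := mul c with hLdef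
  have hsym : ∀ x y : V, ⟪L x, y⟫ = ⟪x, L y⟫ := by
    intro x y
    show ⟪mul c x, y⟫ = ⟪x, mul c y⟫
    rw [hcomm c x]
    exact hassoc x c y
  have hLc : L c = c := hc
  have hcc : ⟪c, c⟫ = (1 : ℝ) := by
    have h := heic c
    rw [hc, hc] at h
    have h2 : (⟪c, c⟫ - 1) • c = 0 := by
      rw [sub_smul, one_smul, ← h, sub_self]
    rcases smul_eq_zero.mp h2 with h3 | h3
    · exact sub_eq_zero.mp h3
    · exact absurd h3 hc0
  -- linearized eiconal identity at c
  have key : ∀ y : V, (2 : ℝ) • L (L y) + L y = (2 : ℝ) • (⟪c, y⟫ • c) + y := by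
    intro y
    have h1 := heic (c + y)
    have h2 := heic (c - y)
    have h3 := heic y
    have hc' : mul c c = c := hc
    simp only [map_add, map_sub, LinearMap.add_apply, LinearMap.sub_apply,
      real_inner_add_add_self, real_inner_sub_sub_self, hc', hcc] at h1 h2
    rw [hcomm y c] at h1 h2
    rw [← hLdef] at h1 h2
    linear_combination (norm := module) (2⁻¹ : ℝ) • h1 - (2⁻¹ : ℝ) • h2 - h3
  -- the three subspaces
  set S : Fin 3 → Submodule ℝ V :=
    ![(ℝ ∙ c), Module.End.eigenspace L (-1), Module.End.eigenspace L (1 / 2 : ℝ)] with hS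
  set μ : Fin 3 → ℝ := ![1, -1, 1 / 2] with hμ
  have hEig : ∀ i : Fin 3, ∀ x ∈ S i, L x = μ i • x := by
    intro i
    fin_cases i
    · intro x hx
      rcases Submodule.mem_span_singleton.mp hx with ⟨a, rfl⟩
      simp [hLc, hμ, smul_comm]
    · intro x hx
      simpa [hμ] using Module.End.mem_eigenspace_iff.mp hx
    · intro x hx
      simpa [hμ] using Module.End.mem_eigenspace_iff.mp hx
  have hμne : ∀ i j : Fin 3, i ≠ j → μ i ≠ μ j := by
    intro i j hij heq
    apply hij
    fin_cases i <;> fin_cases j <;> first | rfl | (exfalso; norm_num [hμ] at heq)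
  have horth : ∀ (a b : ℝ) (x y : V), L x = a • x → L y = b • y → a ≠ b → ⟪x, y⟫ = 0 := by
    intro a b x y hx hy hab
    have h := hsym x y
    rw [hx, hy, real_inner_smul_left, real_inner_smul_right] at h
    by_contra hne
    exact hab (mul_right_cancel₀ hne h)
  have hOF : OrthogonalFamily ℝ (fun i => S i) (fun i => (S i).subtypeₗᵢ) := by
    intro i j hij v w
    exact horth (μ i) (μ j) v w (hEig i v v.2) (hEig j w w.2) (hμne i j hij)
  -- decomposition of every vector
  have hsup : (⨆ i, S i) = ⊤ := by
    rw [Submodule.eq_top_iff']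
    intro x
    set w : V := x - ⟪c, x⟫ • c with hw
    have hcw : ⟪c, w⟫ = 0 := by
      rw [hw, inner_sub_right, real_inner_smul_right, hcc]; ring
    have hkw : (2 : ℝ) • L (L w) + L w = w := by
      have := key w
      rwa [hcw, zero_smul, smul_zero, zero_add] at this
    have hp : ((3⁻¹ : ℝ) • ((2 : ℝ) • L w + (2 : ℝ) • w)) ∈ S 2 := by
      show _ ∈ Module.End.eigenspace L (1 / 2 : ℝ)
      rw [Module.End.mem_eigenspace_iff]
      simp only [map_smul, map_add]
      linear_combination (norm := module) (3⁻¹ : ℝ) • hkw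
    have hq : ((3⁻¹ : ℝ) • (w - (2 : ℝ) • L w)) ∈ S 1 := by
      show _ ∈ Module.End.eigenspace L (-1 : ℝ)
      rw [Module.End.mem_eigenspace_iff]
      simp only [map_smul, map_sub]
      linear_combination (norm := module) (-3⁻¹ : ℝ) • hkw
    have hc' : (⟪c, x⟫ • c) ∈ S 0 := by
      exact Submodule.smul_mem _ _ (Submodule.mem_span_singleton_self c)
    have hxeq : x = ⟪c, x⟫ • c + ((3⁻¹ : ℝ) • ((2 : ℝ) • L w + (2 : ℝ) • w))
        + ((3⁻¹ : ℝ) • (w - (2 : ℝ) • L w)) := by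
      have hww : ((3⁻¹ : ℝ) • ((2 : ℝ) • L w + (2 : ℝ) • w))
          + ((3⁻¹ : ℝ) • (w - (2 : ℝ) • L w)) = w := by module
      rw [add_assoc, hww, hw]
      abel
    rw [hxeq]
    exact add_mem (add_mem (Submodule.mem_iSup_of_mem 0 hc')
      (Submodule.mem_iSup_of_mem 2 hp)) (Submodule.mem_iSup_of_mem 1 hq)
  have hInt : DirectSum.IsInternal S :=
    (DirectSum.isInternal_submodule_iff_iSupIndep_and_iSup_eq_top S).mpr
      ⟨hOF.independent, hsup⟩
  -- traces
  have hMaps : ∀ i : Fin 3, Set.MapsTo L (S i) (S i) := by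
    intro i x hx
    rw [hEig i x hx]
    exact Submodule.smul_mem _ _ hx
  have hTrRes : ∀ i : Fin 3,
      LinearMap.trace ℝ (S i) (L.restrict (hMaps i)) = μ i * Module.finrank ℝ (S i) := by
    intro i
    have : L.restrict (hMaps i) = μ i • LinearMap.id := by
      ext x
      have hx := hEig i x x.2
      simpa using (LinearMap.restrict_coe_apply L (hMaps i) x).trans hx
    rw [this, map_smul, LinearMap.trace_id]
    simp
  have htrace : LinearMap.trace ℝ V L = ∑ i, μ i * Module.finrank ℝ (S i) := by
    rw [LinearMap.trace_eq_sum_trace_restrict hInt hMaps]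
    exact Finset.sum_congr rfl fun i _ => hTrRes i
  have hd0 : Module.finrank ℝ (S 0) = 1 := by
    show Module.finrank ℝ (ℝ ∙ c) = 1
    exact finrank_span_singleton hc0
  set d1 : ℕ := Module.finrank ℝ (Module.End.eigenspace L (-1)) with hd1
  set d2 : ℕ := Module.finrank ℝ (Module.End.eigenspace L (1 / 2 : ℝ)) with hd2
  have htr0 : LinearMap.trace ℝ V L = 0 := htr c
  have hsum : (1 : ℝ) + (-1) * d1 + (1 / 2) * d2 = 0 := by
    rw [htrace] at htr0
    rw [Fin.sum_univ_three] at htr0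
    have e1 : Module.finrank ℝ (S 1) = d1 := rfl
    have e2 : Module.finrank ℝ (S 2) = d2 := rfl
    rw [hd0, e1, e2] at htr0
    rw [show μ 2 = 1 / 2 from rfl] at htr0
    simp only [hμ] at htr0
    norm_num at htr0 ⊢
    linarith
  have hkey : d2 = 2 * (d1 - 1) ∧ d1 ≥ 1 := by
    have h2 : (d2 : ℝ) = 2 * d1 - 2 := by linarith
    have hge : (1 : ℝ) ≤ d1 := by
      have : (0 : ℝ) ≤ d2 := Nat.cast_nonneg d2
      linarith
    have hge' : 1 ≤ d1 := by exact_mod_cast hge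
    constructor
    · have : (d2 : ℝ) = (2 * (d1 - 1) : ℕ) := by
        push_cast [Nat.cast_sub hge']
        linarith
      exact_mod_cast this
    · exact hge'
  -- finrank V
  have hrankV : Module.finrank ℝ V = 1 + d1 + d2 := by
    have e := LinearEquiv.ofBijective (DirectSum.coeLinearMap S) hInt
    have hfr : Module.finrank ℝ V = Module.finrank ℝ (DirectSum (Fin 3) fun j => ↥(S j)) :=
      (LinearEquiv.finrank_eq e).symm
    rw [hfr, Module.finrank_directSum, Fin.sum_univ_three, hd0]
    rfl
  have hmval : m = d1 - 1 := hm
  refine ⟨?_, ?_⟩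
  · rw [hmval]; exact hkey.1
  · obtain ⟨hk1, hk2⟩ := hkey
    rw [hrankV, hmval]
    omega
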